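/- Fix k ≥ 3. Let C be a partial k-net every finite subset of which is open, let A ⊆ C be such that A ≤_o C, and let c ∈ C ∖ A be such that either c is a point incident with exactly two lines of A, or c is a line incident with exactly one point of A. Then A ∪ {c} ≤_o C. -/

import Mathlib

namespace KNet

variable {P L : Type}

/-- The lines of `X` incident with the point `p`. -/
def linesThru (I : P → L → Prop) (X : Set (P ⊕ L)) (p : P) : Set L :=
  {l : L | Sum.inr l ∈ X ∧ I p l}

/-- The points of `X` incident with the line `l`. -/
def pointsOn (I : P → L → Prop) (X : Set (P ⊕ L)) (l : L) : Set P :=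
  {p : P | Sum.inl p ∈ X ∧ I p l}

/-- An element is hyperfree in `X` if it is a point incident with at most two lines of `X`,
or a line incident with at most one point of `X`. -/
def Hyperfree (I : P → L → Prop) (X : Set (P ⊕ L)) : (P ⊕ L) → Prop
  | Sum.inl p => (linesThru I X p).encard ≤ 2
  | Sum.inr l => (pointsOn I X l).encard ≤ 1

/-- `B` is open over `A`. -/
def OpenOver (I : P → L → Prop) (A B : Set (P ⊕ L)) : Prop :=
  ∀ C : Set (P ⊕ L), C ⊆ B \ A → C.Finite → C.Nonempty →
    ∃ c ∈ C, Hyperfree I (A ∪ C) c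

/-- `B` is open. -/
def IsOpen (I : P → L → Prop) (B : Set (P ⊕ L)) : Prop :=
  ∀ C : Set (P ⊕ L), C ⊆ B → C.Finite → C.Nonempty →
    ∃ c ∈ C, Hyperfree I C c

/-- `X` is a partial `k`-net, with parallelism-type predicates `Pc i` on lines:
every line of `X` satisfies some `Pc i`; for every point of `X` and every `i` there is
at most one line of `X` in `Pc i` incident with it; and for `i ≠ j` any line of `X` in
`Pc i` and any line of `X` in `Pc j` are incident with at most one common point of `X`. -/
def IsPartialNet (k : ℕ) (I : P → L → Prop) (Pc : Fin k → L → Prop)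
    (X : Set (P ⊕ L)) : Prop :=
  (∀ l : L, Sum.inr l ∈ X → ∃ i : Fin k, Pc i l) ∧
  (∀ p : P, Sum.inl p ∈ X → ∀ i : Fin k, ∀ l l' : L,
    Sum.inr l ∈ X → Sum.inr l' ∈ X → Pc i l → Pc i l' → I p l → I p l' → l = l') ∧
  (∀ i j : Fin k, i ≠ j → ∀ l l' : L, Sum.inr l ∈ X → Sum.inr l' ∈ X →
    Pc i l → Pc j l' → ∀ p p' : P, Sum.inl p ∈ X → Sum.inl p' ∈ X →
      I p l → I p l' → I p' l → I p' l' → p = p')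

end KNet

open KNet

theorem stmt14 {P L : Type} (k : ℕ) (hk : 3 ≤ k)
    (I : P → L → Prop) (Pc : Fin k → L → Prop)
    (hpartial : IsPartialNet k I Pc (Set.univ : Set (P ⊕ L)))
    (hopen : IsOpen I (Set.univ : Set (P ⊕ L)))
    (A : Set (P ⊕ L)) (hA : OpenOver I A Set.univ)
    (c : P ⊕ L) (hc : c ∉ A)
    (hcase :
      (∃ p : P, c = Sum.inl p ∧ (linesThru I A p).encard = 2) ∨
      (∃ l : L, c = Sum.inr l ∧ (pointsOn I A l).encard = 1)) :
    OpenOver I (A ∪ {c}) Set.univ := by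
  intro C hC hfin hne
  have hCA : ∀ x ∈ C, x ∉ A := fun x hx hxa => (hC hx).2 (Or.inl hxa)
  have hCc : ∀ x ∈ C, x ≠ c := fun x hx hxc => (hC hx).2 (Or.inr hxc)
  have hset : A ∪ insert c C = (A ∪ {c}) ∪ C := by
    ext x; simp [Set.mem_insert_iff]; tauto
  obtain ⟨d, hd, hhf⟩ := hA (insert c C)
    (fun x hx => ⟨Set.mem_univ x, by
      rcases hx with rfl | hx
      · exact hc
      · exact hCA x hx⟩)
    (hfin.insert c) ⟨c, Set.mem_insert c C⟩
  rcases Set.mem_insert_iff.mp hd with rfl | hdC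
  · -- the witness is c itself
    -- get a witness from C directly
    obtain ⟨e, heC, hhf2⟩ := hA C
      (fun x hx => ⟨Set.mem_univ x, hCA x hx⟩) hfin hne
    rcases hcase with ⟨p, rfl, h2⟩ | ⟨l, rfl, h1⟩
    · -- c is a point p with exactly two lines of A
      have hle : (linesThru I (A ∪ insert (Sum.inl p) C) p).encard ≤ 2 := hhf
      have hsub : linesThru I A p ⊆ linesThru I (A ∪ insert (Sum.inl p) C) p :=
        fun m hm => ⟨Or.inl hm.1, hm.2⟩
      have hfin2 : (linesThru I A p).Finite := by
        apply Set.finite_of_encard_eq_coe (k := 2); exact_mod_cast h2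
      have heq := hfin2.eq_of_subset_of_encard_le hsub (by rw [h2]; exact hle)
      have hno : ∀ m : L, Sum.inr m ∈ C → ¬ I p m := by
        intro m hm hIm
        have : m ∈ linesThru I A p := by
          rw [heq]
          exact ⟨Or.inr (Set.mem_insert_of_mem _ hm), hIm⟩
        exact hCA _ hm this.1
      refine ⟨e, heC, ?_⟩
      match e with
      | Sum.inl q =>
        have : linesThru I ((A ∪ {Sum.inl p}) ∪ C) q = linesThru I (A ∪ C) q := by
          ext m
          constructor
          · rintro ⟨(hm | hm) | hm, hIm⟩
            · exact ⟨Or.inl hm, hIm⟩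
            · exact absurd hm (by simp)
            · exact ⟨Or.inr hm, hIm⟩
          · rintro ⟨hm | hm, hIm⟩
            · exact ⟨Or.inl (Or.inl hm), hIm⟩
            · exact ⟨Or.inr hm, hIm⟩
        show (linesThru I ((A ∪ {Sum.inl p}) ∪ C) q).encard ≤ 2
        rw [this]; exact hhf2
      | Sum.inr m =>
        have : pointsOn I ((A ∪ {Sum.inl p}) ∪ C) m = pointsOn I (A ∪ C) m := by
          ext q
          constructor
          · rintro ⟨(hq | hq) | hq, hIq⟩
            · exact ⟨Or.inl hq, hIq⟩
            · have hqp : q = p := by simpa using hq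
              subst hqp
              exact absurd hIq (hno m heC)
            · exact ⟨Or.inr hq, hIq⟩
          · rintro ⟨hq | hq, hIq⟩
            · exact ⟨Or.inl (Or.inl hq), hIq⟩
            · exact ⟨Or.inr hq, hIq⟩
        show (pointsOn I ((A ∪ {Sum.inl p}) ∪ C) m).encard ≤ 1
        rw [this]; exact hhf2
    · -- c is a line l with exactly one point of A
      have hle : (pointsOn I (A ∪ insert (Sum.inr l) C) l).encard ≤ 1 := hhf
      have hsub : pointsOn I A l ⊆ pointsOn I (A ∪ insert (Sum.inr l) C) l :=
        fun q hq => ⟨Or.inl hq.1, hq.2⟩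
      have hfin2 : (pointsOn I A l).Finite := by
        apply Set.finite_of_encard_eq_coe (k := 1); exact_mod_cast h1
      have heq := hfin2.eq_of_subset_of_encard_le hsub (by rw [h1]; exact hle)
      have hno : ∀ q : P, Sum.inl q ∈ C → ¬ I q l := by
        intro q hq hIq
        have : q ∈ pointsOn I A l := by
          rw [heq]
          exact ⟨Or.inr (Set.mem_insert_of_mem _ hq), hIq⟩
        exact hCA _ hq this.1
      refine ⟨e, heC, ?_⟩
      match e with
      | Sum.inl q =>
        have : linesThru I ((A ∪ {Sum.inr l}) ∪ C) q = linesThru I (A ∪ C) q := by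
          ext m
          constructor
          · rintro ⟨(hm | hm) | hm, hIm⟩
            · exact ⟨Or.inl hm, hIm⟩
            · have hml : m = l := by simpa using hm
              subst hml
              exact absurd hIm (hno q heC)
            · exact ⟨Or.inr hm, hIm⟩
          · rintro ⟨hm | hm, hIm⟩
            · exact ⟨Or.inl (Or.inl hm), hIm⟩
            · exact ⟨Or.inr hm, hIm⟩
        show (linesThru I ((A ∪ {Sum.inr l}) ∪ C) q).encard ≤ 2
        rw [this]; exact hhf2
      | Sum.inr m =>
        have : pointsOn I ((A ∪ {Sum.inr l}) ∪ C) m = pointsOn I (A ∪ C) m := by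
          ext q
          constructor
          · rintro ⟨(hq | hq) | hq, hIq⟩
            · exact ⟨Or.inl hq, hIq⟩
            · exact absurd hq (by simp)
            · exact ⟨Or.inr hq, hIq⟩
          · rintro ⟨hq | hq, hIq⟩
            · exact ⟨Or.inl (Or.inl hq), hIq⟩
            · exact ⟨Or.inr hq, hIq⟩
        show (pointsOn I ((A ∪ {Sum.inr l}) ∪ C) m).encard ≤ 1
        rw [this]; exact hhf2
  · refine ⟨d, hdC, ?_⟩
    rwa [hset] at hhf
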